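/- Let C be an n×n Cauchy matrix over a field K with data (x_1,...,x_n; x̃_1,...,x̃_n). Then for each i, the i-th row sum of C^{-1} equals -(∏_k (x̃_i - x_k)) / (∏_{k ≠ i} (x̃_i - x̃_k)). -/

import Mathlib

open Polynomial Finset
open scoped Matrix

section Aux
variable {K : Type*} [Field K] {n : ℕ}

lemma deg_prod_lin (v : Fin n → K) (s : Finset (Fin n)) :
    (∏ k ∈ s, (X - Polynomial.C (v k))).degree = (s.card : WithBot ℕ) := by
  rw [degree_prod]
  simp [degree_X_sub_C]

lemma deg_sum_lt (c : Fin n → K) (y : Fin n → K) (hn : 0 < n) :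
    (∑ j, Polynomial.C (c j) * ∏ k ∈ univ.erase j, (X - Polynomial.C (y k))).degree
      < (n : WithBot ℕ) := by
  apply lt_of_le_of_lt (degree_sum_le _ _)
  rw [Finset.sup_lt_iff (by exact_mod_cast WithBot.bot_lt_coe n)]
  intro j _
  apply lt_of_le_of_lt (degree_mul_le _ _)
  have h1 : (Polynomial.C (c j)).degree ≤ 0 := degree_C_le
  have h2 := deg_prod_lin y (univ.erase j)
  rw [h2]
  have hcard : (univ.erase j).card = n - 1 := by simp
  calc (Polynomial.C (c j)).degree + ((univ.erase j).card : WithBot ℕ)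
      ≤ 0 + ((univ.erase j).card : WithBot ℕ) := add_le_add_left h1 _
    _ = ((n - 1 : ℕ) : WithBot ℕ) := by rw [hcard, zero_add]
    _ < (n : WithBot ℕ) := by exact_mod_cast Nat.sub_lt hn one_pos

lemma zero_of_roots (hn : 0 < n) (x y : Fin n → K) (hx : Function.Injective x)
    (hy : Function.Injective y)
    (c : Fin n → K)
    (hroots : ∀ i, (∑ j, Polynomial.C (c j) * ∏ k ∈ univ.erase j, (X - Polynomial.C (y k))).eval (x i) = 0) :
    ∀ j, c j = 0 := by
  classical
  set Q : K[X] := ∑ j, Polynomial.C (c j) * ∏ k ∈ univ.erase j, (X - Polynomial.C (y k)) with hQ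
  have hQ0 : Q = 0 := by
    apply Polynomial.eq_zero_of_degree_lt_of_eval_finset_eq_zero (Finset.image x univ)
    · rw [Finset.card_image_of_injective _ hx, Finset.card_univ, Fintype.card_fin]
      exact deg_sum_lt c y hn
    · intro t ht
      obtain ⟨i, _, rfl⟩ := Finset.mem_image.mp ht
      exact hroots i
  intro j
  have := congrArg (Polynomial.eval (y j)) hQ0
  rw [hQ] at this
  simp only [eval_zero, eval_finset_sum, eval_mul, eval_C, eval_prod, eval_sub, eval_X] at this
  rw [Finset.sum_eq_single j] at this
  · have hne : (∏ k ∈ univ.erase j, (y j - y k)) ≠ 0 := by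
      apply Finset.prod_ne_zero_iff.mpr
      intro k hk
      exact sub_ne_zero_of_ne (fun h => (Finset.mem_erase.mp hk).1 (hy h.symm))
    exact (mul_eq_zero.mp this).resolve_right hne
  · intro b _ hbj
    apply mul_eq_zero_of_right
    apply Finset.prod_eq_zero (Finset.mem_erase.mpr ⟨hbj.symm, Finset.mem_univ j⟩)
    simp
  · simp

-- the product over all k, factored at j
lemma prod_factor (x y : Fin n → K) (hxy : ∀ i j, x i ≠ y j) (i j : Fin n) :
    (∏ k ∈ univ.erase j, (x i - y k)) = (x i - y j)⁻¹ * ∏ k, (x i - y k) := by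
  rw [← Finset.mul_prod_erase univ _ (Finset.mem_univ j), ← mul_assoc,
    inv_mul_cancel₀ (sub_ne_zero_of_ne (hxy i j)), one_mul]

lemma prodA_ne_zero (x y : Fin n → K) (hxy : ∀ i j, x i ≠ y j) (i : Fin n) :
    (∏ k, (x i - y k)) ≠ 0 :=
  Finset.prod_ne_zero_iff.mpr fun k _ => sub_ne_zero_of_ne (hxy i k)

lemma key_identity (hn : 0 < n) (x y : Fin n → K) (hy : Function.Injective y)
    (hxy : ∀ i j, x i ≠ y j) (i : Fin n) :
    ∑ j, (x i - y j)⁻¹ *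
      ((∏ k, (y j - x k)) / (∏ k ∈ univ.erase j, (y j - y k))) = -1 := by
  classical
  set r : Fin n → K := fun j => (∏ k, (y j - x k)) / (∏ k ∈ univ.erase j, (y j - y k)) with hr
  have hden : ∀ j, (∏ k ∈ univ.erase j, (y j - y k)) ≠ 0 := fun j =>
    Finset.prod_ne_zero_iff.mpr fun k hk =>
      sub_ne_zero_of_ne (fun h => (Finset.mem_erase.mp hk).1 (hy h.symm))
  set P : K[X] := (∏ k, (X - Polynomial.C (x k))) - (∏ k, (X - Polynomial.C (y k)))
      - ∑ j, Polynomial.C (r j) * ∏ k ∈ univ.erase j, (X - Polynomial.C (y k)) with hP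
  have hP0 : P = 0 := by
    apply Polynomial.eq_zero_of_degree_lt_of_eval_finset_eq_zero (Finset.image y univ)
    · rw [Finset.card_image_of_injective _ hy, Finset.card_univ, Fintype.card_fin]
      apply lt_of_le_of_lt (degree_sub_le _ _)
      apply max_lt
      · have hx1 : (∏ k, (X - Polynomial.C (x k))).degree = (n : WithBot ℕ) := by
          rw [deg_prod_lin]; simp
        have hy1 : (∏ k, (X - Polynomial.C (y k))).degree = (n : WithBot ℕ) := by
          rw [deg_prod_lin]; simp
        have hne : (∏ k, (X - Polynomial.C (x k))) ≠ 0 := by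
          intro h; rw [h, degree_zero] at hx1
          exact (by exact_mod_cast WithBot.bot_lt_coe n : (⊥ : WithBot ℕ) < n).ne hx1
        have := Polynomial.degree_sub_lt (hx1.trans hy1.symm) hne (by
          rw [Monic.leadingCoeff, Monic.leadingCoeff] <;>
            exact monic_prod_of_monic _ _ fun k _ => monic_X_sub_C _)
        rwa [hx1] at this
      · exact deg_sum_lt r y hn
    · intro t ht
      obtain ⟨j, _, rfl⟩ := Finset.mem_image.mp ht
      rw [hP]
      simp only [eval_sub, eval_prod, eval_X, eval_C, eval_finset_sum, eval_mul]
      have h2 : (∏ k, (y j - y k)) = 0 :=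
        Finset.prod_eq_zero (Finset.mem_univ j) (sub_self _)
      rw [h2, Finset.sum_eq_single j]
      · rw [hr]
        rw [div_mul_cancel₀ _ (hden j), sub_zero, sub_self]
      · intro b _ hbj
        apply mul_eq_zero_of_right
        apply Finset.prod_eq_zero (Finset.mem_erase.mpr ⟨hbj.symm, Finset.mem_univ j⟩)
        simp
      · simp
  have hev := congrArg (Polynomial.eval (x i)) hP0
  rw [hP] at hev
  simp only [eval_zero, eval_sub, eval_prod, eval_X, eval_C, eval_finset_sum, eval_mul] at hev
  rw [Finset.prod_eq_zero (Finset.mem_univ i) (by simp : x i - x i = 0)] at hev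
  have hA := prodA_ne_zero x y hxy i
  have hsum : ∑ j, r j * ∏ k ∈ univ.erase j, (x i - y k) = -(∏ k, (x i - y k)) := by
    linear_combination -hev
  have : ∑ j, (x i - y j)⁻¹ * r j = -1 := by
    have := congrArg (· * (∏ k, (x i - y k))⁻¹) hsum
    simp only [Finset.sum_mul, neg_mul] at this
    rw [mul_inv_cancel₀ hA] at this
    rw [← this]
    apply Finset.sum_congr rfl
    intro j _
    rw [prod_factor x y hxy i j]
    have heq : (r j * ((x i - y j)⁻¹ * ∏ k, (x i - y k))) * (∏ k, (x i - y k))⁻¹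
        = (r j * (x i - y j)⁻¹) * ((∏ k, (x i - y k)) * (∏ k, (x i - y k))⁻¹) := by ring
    rw [heq, mul_inv_cancel₀ hA, mul_one, mul_comm]
  exact this

end Aux

theorem stmt3 {K : Type*} [Field K] {n : ℕ} (hn : 0 < n)
    (x y : Fin n → K) (hx : Function.Injective x) (hy : Function.Injective y)
    (hxy : ∀ i j, x i ≠ y j)
    (C : Matrix (Fin n) (Fin n) K) (hC : ∀ i j, C i j = (x i - y j)⁻¹) :
    ∀ i, ∑ j, C⁻¹ i j = -((∏ k, (y i - x k)) / (∏ k ∈ Finset.univ \ {i}, (y i - y k))) := by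
  classical
  set r : Fin n → K := fun j => (∏ k, (y j - x k)) / (∏ k ∈ univ.erase j, (y j - y k)) with hr
  set v : Fin n → K := fun j => -(r j) with hv
  have hA := prodA_ne_zero x y hxy
  -- C *ᵥ v = 1
  have hCv : C *ᵥ v = fun _ => 1 := by
    funext i
    simp only [Matrix.mulVec, dotProduct, hC, hv, mul_neg]
    rw [Finset.sum_neg_distrib, key_identity hn x y hy hxy i, neg_neg]
  -- C is a unit
  have hker : ∀ c : Fin n → K, C *ᵥ c = 0 → c = 0 := by
    intro c hc
    funext j
    refine zero_of_roots hn x y hx hy c (fun i => ?_) j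
    simp only [eval_finset_sum, eval_mul, eval_C, eval_prod, eval_sub, eval_X]
    have hci : ∑ k, (x i - y k)⁻¹ * c k = 0 := by
      have := congrFun hc i
      simpa [Matrix.mulVec, dotProduct, hC] using this
    calc ∑ j, c j * ∏ k ∈ univ.erase j, (x i - y k)
        = (∑ k, (x i - y k)⁻¹ * c k) * ∏ k, (x i - y k) := by
          rw [Finset.sum_mul]
          apply Finset.sum_congr rfl
          intro j _
          rw [prod_factor x y hxy i j]; ring
      _ = 0 := by rw [hci, zero_mul]
  have hU : IsUnit C := by
    rw [← Matrix.mulVec_injective_iff_isUnit]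
    intro a b hab
    have h0 : C *ᵥ (a - b) = 0 := by
      rw [Matrix.mulVec_sub, hab, sub_self]
    have := hker _ h0
    funext k
    have := congrFun this k
    simpa [sub_eq_zero] using this
  have hinv : C⁻¹ * C = 1 := Matrix.nonsing_inv_mul C ((Matrix.isUnit_iff_isUnit_det C).mp hU)
  intro i
  have : C⁻¹ *ᵥ (C *ᵥ v) = v := by
    rw [Matrix.mulVec_mulVec, hinv, Matrix.one_mulVec]
  rw [hCv] at this
  have := congrFun this i
  simp only [Matrix.mulVec, dotProduct, mul_one] at this
  rw [this, hv, hr]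
  rw [Finset.sdiff_singleton_eq_erase]
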